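/- arXiv:2205.14897 — 3 statements merged into one kernel-verified Lean document; each statement's English description precedes it below -/
import Mathlib

section
/- Let G be a weighted directed graph with a tree decomposition Φ = (T, {B_x}) rooted at r. For u ∈ V(G) define B↑(u) as the union of the bags B_{x'} over all ancestors x' of St(u) (including St(u) itself), where St(u) is the minimum-depth bag containing u. Then for any u, v ∈ V(G), the distance d_G(u,v) equals min over s ∈ B↑(u) ∩ B↑(v) of d_G(u,s) + d_G(s,v). -/
open Classical

/-- Cost of the walk from `u` following the vertex list `l` and required to end at `v`
(the last entry of a nonempty `l` must be `v` for the cost to be finite).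
Non-edges are encoded by cost `⊤`. -/
noncomputable def pathCost {V : Type*} (c : V → V → ℕ∞) : V → List V → V → ℕ∞
  | u, [], v => if u = v then 0 else ⊤
  | u, w :: l, v => c u w + pathCost c w l v

/-- Weighted shortest-path distance in the directed graph encoded by the cost function `c`. -/
noncomputable def ddist {V : Type*} (c : V → V → ℕ∞) (u v : V) : ℕ∞ :=
  ⨅ l : List V, pathCost c u l v

/-- The underlying undirected simple graph of the directed graph encoded by `c`. -/
def underlyingGraph {V : Type*} (c : V → V → ℕ∞) : SimpleGraph V where
  Adj a b := a ≠ b ∧ (c a b ≠ ⊤ ∨ c b a ≠ ⊤)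
  symm := ⟨by rintro a b ⟨hne, h⟩; exact ⟨hne.symm, h.symm⟩⟩
  loopless := ⟨by rintro a ⟨hne, _⟩; exact hne rfl⟩

/-- `x'` is an ancestor of `x` in the tree `T` rooted at `r` (including `x` itself). -/
def IsAnc {ι : Type*} (T : SimpleGraph ι) (r x' x : ι) : Prop :=
  T.dist r x' + T.dist x' x = T.dist r x


open SimpleGraph

namespace Stmt3Aux

variable {ι : Type*} {T : SimpleGraph ι}

/-- The unique path between two vertices of a tree. -/
noncomputable def tpath (hT : T.IsTree) (a b : ι) : T.Walk a b :=
  (hT.existsUnique_path a b).choose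

lemma tpath_isPath (hT : T.IsTree) (a b : ι) : (tpath hT a b).IsPath :=
  (hT.existsUnique_path a b).choose_spec.1

lemma tpath_unique (hT : T.IsTree) {a b : ι} (p : T.Walk a b) (hp : p.IsPath) :
    p = tpath hT a b :=
  (hT.existsUnique_path a b).choose_spec.2 p hp

lemma length_of_isPath (hT : T.IsTree) {a b : ι} (p : T.Walk a b) (hp : p.IsPath) :
    p.length = T.dist a b := by
  obtain ⟨w, hw⟩ := hT.isConnected.exists_walk_length_eq_dist a b
  have h1 : p = tpath hT a b := tpath_unique hT p hp
  have h2 : w.bypass = tpath hT a b := tpath_unique hT _ w.bypass_isPath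
  have h3 : w.bypass.length ≤ w.length := w.length_bypass_le
  have h4 := T.dist_le p
  rw [h1, ← h2] at h4 ⊢
  omega

lemma dist_split (hT : T.IsTree) {a b z : ι} (p : T.Walk a b) (hp : p.IsPath)
    (hz : z ∈ p.support) : T.dist a z + T.dist z b = T.dist a b := by
  have h1 := length_of_isPath hT _ (hp.takeUntil hz)
  have h2 := length_of_isPath hT _ (hp.dropUntil hz)
  have h3 := length_of_isPath hT p hp
  have h4 := congrArg Walk.length (p.take_spec hz)
  rw [Walk.length_append] at h4
  omega

lemma isPath_append {a z b : ι} {q1 : T.Walk a z} {q2 : T.Walk z b}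
    (h1 : q1.IsPath) (h2 : q2.IsPath)
    (hmeet : ∀ t ∈ q1.support, t ∈ q2.support → t = z) : (q1.append q2).IsPath := by
  rw [Walk.isPath_def, Walk.support_append]
  refine List.Nodup.append h1.support_nodup ?_ ?_
  · exact h2.support_nodup.tail
  · intro t ht ht'
    have htq2 : t ∈ q2.support := List.mem_of_mem_tail ht'
    have htz : t = z := hmeet t ht htq2
    subst htz
    have : t ∉ q2.support.tail := by
      have hnd := h2.support_nodup
      rw [q2.support_eq_cons] at hnd
      exact (List.nodup_cons.mp hnd).1
    exact this ht'

lemma meet {x y : ι} (p : T.Walk x y) {a b : ι} (w : T.Walk a b) (hw : w.IsPath)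
    (hb : b ∈ p.support) :
    ∃ z, z ∈ p.support ∧ z ∈ w.support ∧
      ∃ w' : T.Walk a z, w'.IsPath ∧ w'.support ⊆ w.support ∧
        (∀ t ∈ w'.support, t ∈ p.support → t = z) := by
  induction w with
  | nil =>
    refine ⟨_, hb, by simp, Walk.nil, by simp, by simp, ?_⟩
    intro t ht _
    simpa using ht
  | @cons a a2 b h w2 ih =>
    by_cases hu : a ∈ p.support
    · refine ⟨a, hu, Walk.start_mem_support _, Walk.nil, by simp, by simp, ?_⟩
      intro t ht _
      simpa using ht
    · have hw2 : w2.IsPath := hw.of_cons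
      obtain ⟨z, hz, hzw, w', hw', hsub, hmeet⟩ := ih hw2 hb
      refine ⟨z, hz, ?_, Walk.cons h w', ?_, ?_, ?_⟩
      · rw [Walk.support_cons]; exact List.mem_cons_of_mem _ hzw
      · rw [Walk.cons_isPath_iff]
        exact ⟨hw', fun hc => (Walk.cons_isPath_iff h w2).mp hw |>.2 (hsub hc)⟩
      · intro t ht
        rw [Walk.support_cons] at ht ⊢
        rcases List.mem_cons.mp ht with rfl | ht
        · exact List.mem_cons_self
        · exact List.mem_cons_of_mem _ (hsub ht)
      · intro t ht htp
        rw [Walk.support_cons] at ht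
        rcases List.mem_cons.mp ht with rfl | ht
        · exact absurd htp hu
        · exact hmeet t ht htp

lemma mem_of_dist_eq (hT : T.IsTree) {a b m : ι}
    (h : T.dist a m + T.dist m b = T.dist a b) : m ∈ (tpath hT a b).support := by
  by_contra hm
  have hba : a ∈ (tpath hT a b).support := Walk.start_mem_support _
  obtain ⟨z, hzp, hzw, w', hw', hsub, hmeet⟩ :=
    meet (tpath hT a b) (tpath hT m a) (tpath_isPath hT m a) hba
  have hq : (w'.append ((tpath hT a b).dropUntil z hzp)).IsPath :=
    isPath_append hw' ((tpath_isPath hT a b).dropUntil hzp)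
      (fun t ht htp => hmeet t ht (Walk.support_dropUntil_subset _ hzp htp))
  have hzq : z ∈ (w'.append ((tpath hT a b).dropUntil z hzp)).support := by
    rw [Walk.mem_support_append_iff]
    exact Or.inl w'.end_mem_support
  have e1 : T.dist m z + T.dist z b = T.dist m b := dist_split hT _ hq hzq
  have e2 : T.dist a z + T.dist z b = T.dist a b :=
    dist_split hT _ (tpath_isPath hT a b) hzp
  have e3 : T.dist m z + T.dist z a = T.dist m a :=
    dist_split hT _ (tpath_isPath hT m a) hzw
  have hzm : z ≠ m := fun h' => hm (h' ▸ hzp)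
  have hpos : 0 < T.dist m z := hT.isConnected.pos_dist_of_ne (Ne.symm hzm)
  have hc1 : T.dist a m = T.dist m a := T.dist_comm
  have hc2 : T.dist z a = T.dist a z := T.dist_comm
  omega

lemma median (hT : T.IsTree) (r a b : ι) :
    ∃ m : ι, T.dist r m + T.dist m a = T.dist r a ∧
             T.dist r m + T.dist m b = T.dist r b ∧
             T.dist a m + T.dist m b = T.dist a b := by
  classical
  set L := (tpath hT r a).support.filter (fun z => z ∈ (tpath hT r b).support) with hLdef
  have hrL : r ∈ L := by
    rw [hLdef, List.mem_filter]
    exact ⟨Walk.start_mem_support _, by simp [Walk.start_mem_support]⟩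
  cases hargm : L.argmax (T.dist r) with
  | none => exact absurd (List.argmax_eq_none.mp hargm) (List.ne_nil_of_mem hrL)
  | some m =>
    have hmL : m ∈ L := List.argmax_mem hargm
    have hmax : ∀ z ∈ L, T.dist r z ≤ T.dist r m := fun z hz =>
      List.le_of_mem_argmax hz hargm
    rw [hLdef, List.mem_filter] at hmL
    have hm1 : m ∈ (tpath hT r a).support := hmL.1
    have hm2 : m ∈ (tpath hT r b).support := by simpa using hmL.2
    have e1 := dist_split hT _ (tpath_isPath hT r a) hm1
    have e2 := dist_split hT _ (tpath_isPath hT r b) hm2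
    refine ⟨m, e1, e2, ?_⟩
    set p1 := (tpath hT r a).dropUntil m hm1 with hp1def
    set p2 := (tpath hT r b).dropUntil m hm2 with hp2def
    have hp1 : p1.IsPath := (tpath_isPath hT r a).dropUntil hm1
    have hp2 : p2.IsPath := (tpath_isPath hT r b).dropUntil hm2
    have hkey : ∀ t, t ∈ p1.support → t ∈ p2.support → t = m := by
      intro t ht1 ht2
      have ht1' : t ∈ (tpath hT r a).support := Walk.support_dropUntil_subset _ hm1 ht1
      have ht2' : t ∈ (tpath hT r b).support := Walk.support_dropUntil_subset _ hm2 ht2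
      have htL : t ∈ L := by
        rw [hLdef, List.mem_filter]
        exact ⟨ht1', by simpa using ht2'⟩
      have hle := hmax t htL
      have s1 : T.dist m t + T.dist t a = T.dist m a := dist_split hT p1 hp1 ht1
      have s2 : T.dist r t + T.dist t a = T.dist r a :=
        dist_split hT _ (tpath_isPath hT r a) ht1'
      have hz : T.dist m t = 0 := by omega
      exact ((hT.isConnected.dist_eq_zero_iff).mp hz).symm
    have hq : (p1.reverse.append p2).IsPath := by
      refine isPath_append hp1.reverse hp2 ?_
      intro t ht htp2
      rw [Walk.support_reverse, List.mem_reverse] at ht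
      exact hkey t ht htp2
    have hlen : (p1.reverse.append p2).length = T.dist a b := length_of_isPath hT _ hq
    rw [Walk.length_append, Walk.length_reverse] at hlen
    have l1 : p1.length = T.dist m a := length_of_isPath hT p1 hp1
    have l2 : p2.length = T.dist m b := length_of_isPath hT p2 hp2
    have hc : T.dist a m = T.dist m a := T.dist_comm
    omega

lemma step (hT : T.IsTree) {m b y y' : ι} (hadj : T.Adj y y') (hy : y ≠ m) (_hy' : y' ≠ m)
    (hP : T.dist y m + T.dist m b = T.dist y b) :
    T.dist y' m + T.dist m b = T.dist y' b := by
  by_contra hP'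
  have hm' : m ∉ (tpath hT y' b).support := fun hmem =>
    hP' (dist_split hT _ (tpath_isPath hT y' b) hmem)
  have hmem : m ∈ (tpath hT y b).support := mem_of_dist_eq hT hP
  have hbp : (Walk.cons hadj (tpath hT y' b)).bypass = tpath hT y b :=
    tpath_unique hT _ (Walk.bypass_isPath _)
  have hsub := Walk.support_bypass_subset (Walk.cons hadj (tpath hT y' b))
  rw [hbp] at hsub
  have := hsub hmem
  rw [Walk.support_cons] at this
  rcases List.mem_cons.mp this with h' | h'
  · exact hy h'.symm
  · exact hm' h'

end Stmt3Aux

section MainAux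

variable {V : Type*} (c : V → V → ℕ∞)

lemma pathCost_cons (u w : V) (l : List V) (v : V) :
    pathCost c u (w :: l) v = c u w + pathCost c w l v := rfl

lemma pathCost_nil (u v : V) : pathCost c u [] v = if u = v then 0 else ⊤ := rfl

lemma ddist_le (u v : V) (l : List V) : ddist c u v ≤ pathCost c u l v :=
  iInf_le _ l

lemma ddist_self (u : V) : ddist c u u = 0 :=
  le_antisymm (by simpa [pathCost_nil] using ddist_le c u u []) zero_le

lemma ddist_attain (u v : V) : ∃ l, pathCost c u l v = ddist c u v := by
  by_cases h : ddist c u v = ⊤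
  · refine ⟨[], le_antisymm ?_ ?_⟩
    · rw [h]; exact le_top
    · exact ddist_le c u v []
  · have hlt : ddist c u v < ddist c u v + 1 := (ENat.lt_add_one_iff h).mpr le_rfl
    conv_lhs at hlt => rw [ddist]
    obtain ⟨l, hl⟩ := iInf_lt_iff.mp hlt
    exact ⟨l, le_antisymm ((ENat.lt_add_one_iff h).mp hl) (ddist_le c u v l)⟩

lemma pathCost_append_le (s v : V) :
    ∀ (l1 : List V) (u : V) (l2 : List V),
      pathCost c u (l1 ++ l2) v ≤ pathCost c u l1 s + pathCost c s l2 v := by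
  intro l1
  induction l1 with
  | nil =>
    intro u l2
    by_cases h : u = s
    · subst h; simp [pathCost_nil]
    · simp [pathCost_nil, h]
  | cons w l1 ih =>
    intro u l2
    rw [List.cons_append, pathCost_cons, pathCost_cons, add_assoc]
    exact add_le_add le_rfl (ih w l2)

lemma pathCost_split (s v : V) :
    ∀ (l1 : List V) (u : V) (l2 : List V),
      pathCost c u (l1 ++ s :: l2) v = pathCost c u (l1 ++ [s]) s + pathCost c s l2 v := by
  intro l1
  induction l1 with
  | nil =>
    intro u l2
    simp [pathCost_cons, pathCost_nil, add_assoc]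
  | cons w l1 ih =>
    intro u l2
    rw [List.cons_append, List.cons_append, pathCost_cons, pathCost_cons, ih w l2, add_assoc]

lemma ddist_triangle (u s v : V) : ddist c u v ≤ ddist c u s + ddist c s v := by
  obtain ⟨l1, h1⟩ := ddist_attain c u s
  obtain ⟨l2, h2⟩ := ddist_attain c s v
  calc ddist c u v ≤ pathCost c u (l1 ++ l2) v := ddist_le c u v _
    _ ≤ pathCost c u l1 s + pathCost c s l2 v := pathCost_append_le c s v l1 u l2
    _ = _ := by rw [h1, h2]

lemma ddist_mem_le (u v s : V) (l : List V) (hs : s ∈ u :: l) :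
    ddist c u s + ddist c s v ≤ pathCost c u l v := by
  rcases List.mem_cons.mp hs with rfl | hsl
  · rw [ddist_self, zero_add]
    exact ddist_le c s v l
  · obtain ⟨l1, l2, rfl⟩ := List.append_of_mem hsl
    rw [pathCost_split]
    exact add_le_add (ddist_le c u s _) (ddist_le c s v _)

end MainAux

/-- with a tree decomposition of the underlying graph of a weighted directed
graph, and `B↑(u)` the union of bags of the ancestors of the minimum-depth bag `St(u)`
containing `u`, the distance `d_G(u,v)` equals
`min_{s ∈ B↑(u) ∩ B↑(v)} d_G(u,s) + d_G(s,v)`. -/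
theorem stmt3 {V ι : Type*} [Fintype ι] (c : V → V → ℕ∞)
    (T : SimpleGraph ι) (hT : T.IsTree) (r : ι) (B : ι → Set V)
    (ha : ∀ v : V, ∃ x : ι, v ∈ B x)
    (hb : ∀ u v : V, (underlyingGraph c).Adj u v → ∃ x : ι, u ∈ B x ∧ v ∈ B x)
    (hcon : ∀ u : V, (T.induce {x : ι | u ∈ B x}).Connected)
    (u v : V) (su sv : ι)
    (hsu : u ∈ B su) (hsumin : ∀ y : ι, u ∈ B y → T.dist r su ≤ T.dist r y)
    (hsv : v ∈ B sv) (hsvmin : ∀ y : ι, v ∈ B y → T.dist r sv ≤ T.dist r y) :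
    ddist c u v =
      ⨅ s ∈ {s : V | (∃ x : ι, IsAnc T r x su ∧ s ∈ B x) ∧
                     (∃ x : ι, IsAnc T r x sv ∧ s ∈ B x)},
        ddist c u s + ddist c s v := by
  classical
  obtain ⟨m, me1, me2, me3⟩ := Stmt3Aux.median hT r su sv
  -- P y : m lies on the tree path from y to sv
  set P : ι → Prop := fun y => T.dist y m + T.dist m sv = T.dist y sv with hPdef
  have hPsu : P su := me3
  have trans_bag : ∀ w : V, w ∉ B m → ∀ y0 y1 : ι, w ∈ B y0 → w ∈ B y1 → P y0 → P y1 := by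
    intro w hwm y0 y1 h0 h1 hP0
    have key : ∀ (z0 z1 : {x : ι // x ∈ {x : ι | w ∈ B x}})
        (W : (T.induce {x : ι | w ∈ B x}).Walk z0 z1), P z0.1 → P z1.1 := by
      intro z0 z1 W
      induction W with
      | nil => exact id
      | @cons za zb zc hadj W ih =>
        intro hp
        apply ih
        have hadj' : T.Adj za.1 zb.1 := hadj
        refine Stmt3Aux.step hT hadj' ?_ ?_ hp
        · intro he; exact hwm (he ▸ za.2)
        · intro he; exact hwm (he ▸ zb.2)
    obtain ⟨W⟩ := (hcon w).preconnected ⟨y0, h0⟩ ⟨y1, h1⟩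
    exact key _ _ W hP0
  have HIT : ∀ (l : List V) (w : V), pathCost c w l v ≠ ⊤ →
      (∀ y, w ∈ B y → P y) → (∀ t ∈ w :: l, t ∉ B m) → False := by
    intro l
    induction l with
    | nil =>
      intro w hfin hQ havoid
      have hwv : w = v := by
        by_contra h
        rw [pathCost_nil, if_neg h] at hfin
        exact hfin rfl
      subst hwv
      have hPsv : P sv := hQ sv hsv
      have hd : T.dist sv m = 0 := by
        rw [hPdef] at hPsv
        simp only [SimpleGraph.dist_self] at hPsv
        omega
      have hsvm : sv = m := (hT.isConnected.dist_eq_zero_iff).mp hd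
      exact havoid w (by simp) (hsvm ▸ hsv)
    | cons w1 l ih =>
      intro w hfin hQ havoid
      rw [pathCost_cons] at hfin
      obtain ⟨hf1, hf2⟩ := WithTop.add_ne_top.mp hfin
      have havoid' : ∀ t ∈ w1 :: l, t ∉ B m := fun t ht =>
        havoid t (List.mem_cons_of_mem _ ht)
      by_cases hww : w = w1
      · exact ih w1 hf2 (hww ▸ hQ) havoid'
      · obtain ⟨y0, hwy0, hw1y0⟩ := hb w w1 ⟨hww, Or.inl hf1⟩
        have hQ1 : ∀ y, w1 ∈ B y → P y := fun y hy =>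
          trans_bag w1 (havoid' w1 (List.mem_cons_self)) y0 y hw1y0 hy
            (hQ y0 hwy0)
        exact ih w1 hf2 hQ1 havoid'
  refine le_antisymm (le_iInf fun s => le_iInf fun _ => ddist_triangle c u s v) ?_
  rw [ddist]
  refine le_iInf fun l => ?_
  by_cases hfin : pathCost c u l v = ⊤
  · rw [hfin]; exact le_top
  · have hexists : ∃ t ∈ u :: l, t ∈ B m := by
      by_contra hno
      push_neg at hno
      exact HIT l u hfin
        (fun y hy => trans_bag u (hno u (List.mem_cons_self)) su y hsu hy hPsu)
        hno
    obtain ⟨s, hsmem, hsBm⟩ := hexists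
    have hsS : s ∈ {s : V | (∃ x : ι, IsAnc T r x su ∧ s ∈ B x) ∧
        (∃ x : ι, IsAnc T r x sv ∧ s ∈ B x)} := ⟨⟨m, me1, hsBm⟩, ⟨m, me2, hsBm⟩⟩
    calc (⨅ s ∈ {s : V | (∃ x : ι, IsAnc T r x su ∧ s ∈ B x) ∧
            (∃ x : ι, IsAnc T r x sv ∧ s ∈ B x)}, ddist c u s + ddist c s v)
        ≤ ddist c u s + ddist c s v := iInf₂_le s hsS
      _ ≤ pathCost c u l v := ddist_mem_le c u v s l hsmem
end

section
/- Let G be a weighted directed multigraph and C a stateful walk constraint with state space Q, state function M, and transitions δ_e. Define the product graph G_C with vertex set V(G) × Q, an edge from (u,i) to (v,j) of weight c(e) for each edge e from u to v in G with δ_e(i) = j. Then for any s, t ∈ V(G), q ∈ Q \ {⊥}, and x ≥ 0: there exists a walk of total weight x from s to t in G with M(w) = q if and only if there exists a walk of total weight x from (s,▽) to (t,q) in G_C. -/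
/-- A list of edges of a directed multigraph (with endpoint maps `src`, `tgt`) is a
walk from `s` to `t`: consecutive edges are compatible, a nonempty walk starts at `s`
and ends at `t`, and the empty walk requires `s = t`. -/
def IsWalkFrom {V E : Type*} (src tgt : E → V) (s t : V) (l : List E) : Prop :=
  List.Chain' (fun a b => tgt a = src b) l ∧
  (∀ h : l ≠ [], src (l.head h) = s ∧ tgt (l.getLast h) = t) ∧
  (l = [] → s = t)

/-- Lift a walk in `G` to a walk in the product graph, threading the state. -/
def stmt6Lift {E Q : Type*} (M : List E → Q) : List E → List E → List (E × Q)
  | _, [] => []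
  | pre, e :: r => (e, M pre) :: stmt6Lift M (pre ++ [e]) r

lemma stmt6Lift_map_fst {E Q : Type*} (M : List E → Q) :
    ∀ (w pre : List E), (stmt6Lift M pre w).map Prod.fst = w := by
  intro w
  induction w with
  | nil => intro pre; rfl
  | cons e r ih => intro pre; simp [stmt6Lift, ih]

lemma stmt6Lift_head? {E Q : Type*} (M : List E → Q) (w pre : List E) :
    (stmt6Lift M pre w).head? = w.head?.map (fun e => (e, M pre)) := by
  cases w <;> rfl

lemma stmt6Lift_chain' {V E Q : Type*} (src tgt : E → V) (M : List E → Q) (δ : E → Q → Q)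
    (h2 : ∀ (w : List E) (e : E), List.Chain' (fun a b => tgt a = src b) (w ++ [e]) →
      δ e (M w) = M (w ++ [e])) :
    ∀ (w pre : List E), List.Chain' (fun a b => tgt a = src b) (pre ++ w) →
      List.Chain' (fun a b : E × Q => (tgt a.1, δ a.1 a.2) = (src b.1, b.2))
        (stmt6Lift M pre w) := by
  intro w
  induction w with
  | nil => intro pre _; exact List.isChain_nil
  | cons e r ih =>
    intro pre hc
    rw [stmt6Lift]; apply List.isChain_cons.mpr
    constructor
    · intro b hb
      rw [stmt6Lift_head?] at hb
      cases r with
      | nil => simp at hb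
      | cons e' r' =>
        simp only [List.head?_cons, Option.map_some, Option.mem_def, Option.some.injEq] at hb
        subst hb
        have hR : tgt e = src e' := by
          have hinf : [e, e'] <:+: pre ++ e :: e' :: r' := ⟨pre, r', by simp⟩
          have := hc.infix hinf
          simpa [List.isChain_cons_cons] using this
        have hδ : δ e (M pre) = M (pre ++ [e]) := by
          apply h2
          exact hc.prefix ⟨e' :: r', by simp⟩
        simp [hR, hδ]
    · apply ih (pre ++ [e])
      simpa using hc

lemma stmt6Lift_getLast? {V E Q : Type*} (src tgt : E → V) (M : List E → Q) :
    ∀ (w pre : List E), w ≠ [] →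
      ∃ e, w.getLast? = some e ∧
        (stmt6Lift M pre w).getLast? = some (e, M (pre ++ w.dropLast)) := by
  intro w
  induction w with
  | nil => intro pre h; exact absurd rfl h
  | cons e r ih =>
    intro pre _
    cases r with
    | nil => exact ⟨e, rfl, by simp [stmt6Lift]⟩
    | cons e' r' =>
      obtain ⟨e'', h1, h2⟩ := ih (pre ++ [e]) (by simp)
      refine ⟨e'', by simpa using h1, ?_⟩
      rw [stmt6Lift]
      have hcons : ∀ {α : Type _} (a : α) (l : List α), l ≠ [] →
          (a :: l).getLast? = l.getLast? := by
        intro α a l h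
        cases l with
        | nil => exact absurd rfl h
        | cons b l' => rw [List.getLast?_cons_cons]
      rw [hcons _ _ (by rw [stmt6Lift]; simp), h2]
      simp [List.dropLast_cons_of_ne_nil]

/-- Backward invariant: in a product-chain whose head state is `M pre`, the
transition out of the last edge produces `M (pre ++ edges)`. -/
lemma stmt6_back {V E Q : Type*} (src tgt : E → V) (M : List E → Q) (δ : E → Q → Q)
    (h2 : ∀ (w : List E) (e : E), List.Chain' (fun a b => tgt a = src b) (w ++ [e]) →
      δ e (M w) = M (w ++ [e])) :
    ∀ (w' : List (E × Q)) (pre : List E),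
      List.Chain' (fun a b : E × Q => (tgt a.1, δ a.1 a.2) = (src b.1, b.2)) w' →
      (∀ p ∈ w'.head?, p.2 = M pre) →
      List.Chain' (fun a b => tgt a = src b) (pre ++ w'.map Prod.fst) →
      ∀ p ∈ w'.getLast?, δ p.1 p.2 = M (pre ++ w'.map Prod.fst) := by
  intro w'
  induction w' with
  | nil => intro pre _ _ _ p hp; simp at hp
  | cons a r ih =>
    intro pre hc hhead hch p hp
    have ha2 : a.2 = M pre := hhead a rfl
    have hδa : δ a.1 (M pre) = M (pre ++ [a.1]) := by
      apply h2
      exact hch.prefix ⟨(r.map Prod.fst), by simp⟩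
    cases r with
    | nil =>
      simp only [List.getLast?_singleton, Option.mem_def, Option.some.injEq] at hp
      subst hp
      simpa [ha2] using hδa
    | cons b r' =>
      rw [List.getLast?_cons_cons] at hp
      have hcr : List.Chain' (fun a b : E × Q => (tgt a.1, δ a.1 a.2) = (src b.1, b.2))
          (b :: r') := hc.tail
      have hab : (tgt a.1, δ a.1 a.2) = (src b.1, b.2) :=
        (List.isChain_cons_cons.mp hc).1
      have hb2 : b.2 = M (pre ++ [a.1]) := by
        have := congrArg Prod.snd hab
        simp only at this
        rw [← this, ha2, hδa]
      have := ih (pre ++ [a.1]) hcr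
        (by intro p' hp'; simp only [List.head?_cons, Option.mem_def,
              Option.some.injEq] at hp'; subst hp'; exact hb2)
        (by simpa using hch) p hp
      simpa using this

/-- for a weighted directed multigraph with a stateful walk constraint,
there is a walk of weight `x` from `s` to `t` with state `q ≠ ⊥` iff there is a walk
of weight `x` from `(s,▽)` to `(t,q)` in the product graph `G_C` (whose edges are
pairs `(e,i)` from `(src e, i)` to `(tgt e, δ_e i)` of weight `c e`). -/
theorem stmt6 {V E Q : Type*} (src tgt : E → V) (c : E → ℕ) (C : Set (List E))
    (bot nab : Q) (M : List E → Q) (δ : E → Q → Q)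
    (hphi : ([] : List E) ∈ C)
    (h1 : ∀ w : List E, List.Chain' (fun a b => tgt a = src b) w →
      ((M w ≠ bot ↔ w ∈ C) ∧ (M w = nab ↔ w = [])))
    (h2 : ∀ (w : List E) (e : E), List.Chain' (fun a b => tgt a = src b) (w ++ [e]) →
      δ e (M w) = M (w ++ [e]))
    (h3 : ∀ e : E, δ e bot = bot)
    (s t : V) (q : Q) (hq : q ≠ bot) (x : ℕ) :
    (∃ w : List E, IsWalkFrom src tgt s t w ∧ M w = q ∧ (w.map c).sum = x) ↔
    (∃ w' : List (E × Q),
      IsWalkFrom (fun p => (src p.1, p.2)) (fun p => (tgt p.1, δ p.1 p.2))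
        (s, nab) (t, q) w' ∧ (w'.map (fun p => c p.1)).sum = x) := by
  have hMnil : M [] = nab := ((h1 [] List.isChain_nil).2).mpr rfl
  constructor
  · rintro ⟨w, ⟨hch, hends, hemp⟩, hMw, hsum⟩
    rcases eq_or_ne w [] with rfl | hw
    · refine ⟨[], ⟨List.isChain_nil, by simp, ?_⟩, by simpa using hsum⟩
      intro _
      have := hemp rfl
      rw [this, Prod.mk.injEq]
      exact ⟨rfl, by rw [← hMw, hMnil]⟩
    · refine ⟨stmt6Lift M [] w, ⟨?_, ?_, ?_⟩, ?_⟩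
      · exact stmt6Lift_chain' src tgt M δ h2 w [] (by simpa using hch)
      · intro h
        obtain ⟨e, hgl, hgl'⟩ := stmt6Lift_getLast? src tgt M w [] hw
        constructor
        · have hh : (stmt6Lift M [] w).head? = some ((stmt6Lift M [] w).head h) :=
            List.head?_eq_head h
          rw [stmt6Lift_head?] at hh
          have hwh : w.head? = some (w.head hw) := List.head?_eq_head hw
          rw [hwh] at hh
          simp only [Option.map_some, Option.some.injEq] at hh
          rw [← hh]
          have := (hends hw).1
          simp [this, hMnil]
        · have hgl'' : (stmt6Lift M [] w).getLast h =
              (e, M ([] ++ w.dropLast)) := by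
            apply Option.some.inj
            rw [← List.getLast?_eq_getLast h]
            exact hgl'
          rw [hgl'']
          have hwl : w.getLast hw = e := by
            have hE := (List.getLast?_eq_getLast hw).symm.trans hgl
            exact Option.some.inj hE
          have htgt : tgt e = t := by rw [← hwl]; exact (hends hw).2
          have hδ : δ e (M ([] ++ w.dropLast)) = M (w.dropLast ++ [e]) := by
            simp only [List.nil_append]
            apply h2
            rw [← hwl, List.dropLast_append_getLast hw]
            exact hch
          rw [Prod.mk.injEq]
          refine ⟨htgt, ?_⟩
          rw [hδ, ← hwl, List.dropLast_append_getLast hw, hMw]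
      · intro h
        exfalso
        apply hw
        have := stmt6Lift_map_fst M w []
        rw [h] at this
        simpa using this.symm
      · have : (stmt6Lift M [] w).map (fun p => c p.1) = w.map c := by
          rw [show (fun p : E × Q => c p.1) = c ∘ Prod.fst from rfl,
            ← List.map_map, stmt6Lift_map_fst]
        rw [this, hsum]
  · rintro ⟨w', ⟨hch, hends, hemp⟩, hsum⟩
    rcases eq_or_ne w' [] with rfl | hw'
    · have hst : (s, nab) = (t, q) := hemp rfl
      refine ⟨[], ⟨List.isChain_nil, by simp, fun _ => (Prod.ext_iff.mp hst).1⟩, ?_, ?_⟩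
      · rw [hMnil]; exact (Prod.ext_iff.mp hst).2
      · simpa using hsum
    · set w := w'.map Prod.fst with hwdef
      have hwne : w ≠ [] := by simpa [hwdef] using hw'
      have hchw : List.Chain' (fun a b => tgt a = src b) w := by
        rw [hwdef]; apply (List.isChain_map _).mpr
        exact hch.imp (fun a b hab => congrArg Prod.fst hab)
      have hhead : ∀ p ∈ w'.head?, p.2 = M [] := by
        intro p hp
        have hh : w'.head? = some (w'.head hw') := List.head?_eq_head hw'
        rw [hh] at hp
        have := (hends hw').1
        have hp0 : w'.head hw' = p := by simpa using hp
        have hp' : p = w'.head hw' := hp0.symm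
        rw [hp', hMnil]
        exact (Prod.ext_iff.mp this).2
      have hlast := stmt6_back src tgt M δ h2 w' [] hch hhead (by simpa using hchw)
      have hglw' : w'.getLast? = some (w'.getLast hw') := List.getLast?_eq_getLast hw'
      have hlaste := hlast _ (Option.mem_def.mpr hglw')
      have hend2 := (hends hw').2
      refine ⟨w, ⟨hchw, ?_, fun h => absurd h hwne⟩, ?_, ?_⟩
      · intro h
        constructor
        · have hh : w.head? = (w'.head?).map Prod.fst := by
            rw [hwdef, List.head?_map]
          rw [List.head?_eq_head h, List.head?_eq_head hw'] at hh
          have : w.head h = (w'.head hw').1 := by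
            simpa using Option.some.inj hh
          rw [this]
          exact (Prod.ext_iff.mp (hends hw').1).1
        · have hh : w.getLast? = (w'.getLast?).map Prod.fst := by
            rw [hwdef, List.getLast?_map]
          rw [List.getLast?_eq_getLast h, hglw'] at hh
          have : w.getLast h = (w'.getLast hw').1 := by
            simpa using Option.some.inj hh
          rw [this]
          exact (Prod.ext_iff.mp hend2).1
      · have hend2b : δ (w'.getLast hw').1 (w'.getLast hw').2 = q :=
          (Prod.ext_iff.mp hend2).2
        rw [← hend2b]
        simpa using hlaste.symm
      · rw [hwdef, show (fun p : E × Q => c p.1) = c ∘ Prod.fst from rfl] at *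
        rw [← List.map_map] at hsum
        exact hsum
end

section
/- Let G be a graph, M a matching in G, u and v two distinct unmatched vertices. If there exists an alternating walk from u to v (a walk whose edges alternate between non-matching and matching edges, starting and ending with a non-matching edge) in a bipartite graph G, then there exists an alternating simple path (augmenting path) from u to v, and augmenting along it yields a matching of size |M| + 1. -/
/-- A matching of `G` given as a set of edges: edges of `G`, pairwise vertex-disjoint. -/
def IsMatchingSet {V : Type*} (G : SimpleGraph V) (M : Set (Sym2 V)) : Prop :=
  M ⊆ G.edgeSet ∧ ∀ e ∈ M, ∀ e' ∈ M, e ≠ e' → ∀ x, x ∈ e → x ∉ e'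

/-- Edges alternate between non-matching and matching edges. -/
def IsAltEdges {V : Type*} (M : Set (Sym2 V)) (l : List (Sym2 V)) : Prop :=
  List.Chain' (fun a b => ¬((a ∈ M) ↔ (b ∈ M))) l

/-- The first and last edge of the list are non-matching edges. -/
def EndsNotMatched {V : Type*} (M : Set (Sym2 V)) (l : List (Sym2 V)) : Prop :=
  ∀ h : l ≠ [], l.head h ∉ M ∧ l.getLast h ∉ M

section Aux

open SimpleGraph List

attribute [local instance] Classical.propDecidable

variable {V : Type*} {G : SimpleGraph V} {M : Set (Sym2 V)}

lemma walk_edges_getElem {a b : V} (p : G.Walk a b) (i : ℕ) (h : i < p.edges.length) :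
    p.edges[i] = s(p.getVert i, p.getVert (i+1)) := by
  induction p generalizing i with
  | nil => simp at h
  | cons hadj q ih =>
    match i with
    | 0 => simp [Walk.edges_cons, Walk.getVert_cons_succ]
    | Nat.succ n =>
      simp only [Walk.edges_cons, Walk.length_edges] at h ⊢
      simp only [List.getElem_cons_succ, Walk.getVert_cons_succ]
      exact ih n (by simpa using h)

lemma walk_support_getElem {a b : V} (p : G.Walk a b) (i : ℕ) (h : i < p.support.length) :
    p.support[i] = p.getVert i := by
  induction p generalizing i with
  | nil => simp at h; simp [h]
  | cons hadj q ih =>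
    match i with
    | 0 => simp
    | Nat.succ n =>
      simp only [Walk.support_cons, List.getElem_cons_succ, Walk.getVert_cons_succ]
      exact ih n (by simpa [Walk.length_support] using by simpa [Walk.length_support] using h)

lemma getVert_injOn {a b : V} {p : G.Walk a b} (hp : p.support.Nodup)
    {i j : ℕ} (hi : i ≤ p.length) (hj : j ≤ p.length)
    (h : p.getVert i = p.getVert j) : i = j := by
  have hi' : i < p.support.length := by rw [Walk.length_support]; omega
  have hj' : j < p.support.length := by rw [Walk.length_support]; omega
  have := (List.Nodup.getElem_inj_iff hp (i := i) (j := j) (hi := hi') (hj := hj'))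
  rw [walk_support_getElem _ _ hi', walk_support_getElem _ _ hj'] at this
  exact this.mp h

/-- Parity predicate shifted by k. -/
def PPk (M : Set (Sym2 V)) (k : ℕ) (l : List (Sym2 V)) : Prop :=
  ∀ i (h : i < l.length), l[i] ∈ M ↔ Odd (i + k)

lemma ppk_of_chain : ∀ (l : List (Sym2 V)) (k : ℕ),
    l.Chain' (fun a b => ¬((a ∈ M) ↔ (b ∈ M))) →
    (∀ h : l ≠ [], (l.head h ∈ M ↔ Odd k)) → PPk M k l
  | [], _, _, _ => by intro i h; simp at h
  | a :: t, k, hc, hh => by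
    have ha : a ∈ M ↔ Odd k := hh (by simp)
    have ht : PPk M (k+1) t := by
      refine ppk_of_chain t (k+1) hc.tail ?_
      intro hne
      have := List.isChain_cons.mp hc
      have h2 := this.1 (t.head hne) (List.head_mem_head? hne)
      rw [Nat.odd_add_one]
      constructor
      · intro hm hk; exact h2 ⟨fun _ => hm, fun _ => ha.mpr hk⟩
      · intro hk
        by_contra hm
        exact hk (ha.mp (by
          by_contra ha'
          exact h2 ⟨fun x => absurd x ha', fun x => absurd x hm⟩))
    intro i h
    match i with
    | 0 => simpa using ha
    | Nat.succ n =>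
      simp only [List.getElem_cons_succ]
      have := ht n (by simpa using h)
      rw [this, show n + (k + 1) = n + 1 + k by omega]

lemma chain_of_ppk (l : List (Sym2 V)) (k : ℕ) (h : PPk M k l) :
    l.Chain' (fun a b => ¬((a ∈ M) ↔ (b ∈ M))) := by
  rw [List.Chain', List.isChain_iff_getElem]
  intro i hi
  have h1 := h i (by omega)
  have h2 := h (i+1) (by omega)
  rw [h1, h2]
  intro hcon
  rw [show i + 1 + k = (i + k) + 1 by omega, Nat.odd_add_one] at hcon
  exact iff_not_self hcon

/-- Splice: removing an even-length middle preserves the parity predicate. -/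
lemma ppk_splice (l1 l2 l3 : List (Sym2 V)) (h : PPk M 0 (l1 ++ (l2 ++ l3)))
    (he : Even l2.length) : PPk M 0 (l1 ++ l3) := by
  intro i hi
  simp only [List.length_append] at hi
  by_cases hc : i < l1.length
  · have := h i (by simp; omega)
    rw [List.getElem_append_left hc] at this ⊢
    exact this
  · push_neg at hc
    have h3 : i - l1.length < l3.length := by omega
    have := h (i + l2.length) (by simp; omega)
    rw [List.getElem_append_right (by omega)] at this ⊢
    rw [List.getElem_append_right (by omega)] at this
    have harith : i + l2.length - l1.length - l2.length = i - l1.length := by omega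
    simp only [harith] at this
    rw [this]
    obtain ⟨m, hm⟩ := he
    rw [show i + l2.length + 0 = (i + 0) + 2*m by omega]
    constructor
    · rintro ⟨c, hc⟩; exact ⟨c - m, by omega⟩
    · rintro ⟨c, hc⟩; exact ⟨c + m, by omega⟩

lemma fin2_eq_iff_ne {x y z : Fin 2} (h : x ≠ y) : (z = x ↔ ¬ z = y) := by
  revert x y z; decide

lemma color_getVert (c : G.Coloring (Fin 2)) {a b : V} (p : G.Walk a b) :
    ∀ i, i ≤ p.length → (c (p.getVert i) = c a ↔ Even i) := by
  induction p with
  | nil =>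
    intro i hi
    simp only [Walk.length_nil, Nat.le_zero] at hi
    subst hi; simp
  | @cons x y z hadj q ih =>
    intro i hi
    match i with
    | 0 => simp
    | Nat.succ n =>
      rw [Walk.getVert_cons_succ]
      have hne : c y ≠ c x := fun hcc => (c.valid hadj) hcc.symm
      have := ih n (by simpa using hi)
      rw [Nat.even_add_one, ← this]
      exact fin2_eq_iff_ne hne.symm

lemma even_length_closed (c : G.Coloring (Fin 2)) {a : V} (p : G.Walk a a) :
    Even p.length := by
  have := color_getVert c p p.length le_rfl
  rw [Walk.getVert_length] at this
  exact this.mp rfl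

theorem extract [DecidableEq V] (c : G.Coloring (Fin 2)) {u v : V} (w : G.Walk u v)
    (hw : PPk M 0 w.edges) : ∃ p : G.Walk u v, p.IsPath ∧ PPk M 0 p.edges := by
  by_cases hp : w.IsPath
  · exact ⟨w, hp, hw⟩
  · have hnd : ¬ w.support.Nodup := fun h => hp (Walk.IsPath.mk' h)
    obtain ⟨x, hdup⟩ := List.exists_duplicate_iff_not_nodup.mpr hnd
    have hx : x ∈ w.support := hdup.mem
    have hcount : 2 ≤ w.support.count x := List.duplicate_iff_two_le_count.mp hdup
    set q := w.takeUntil x hx with hq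
    set r := w.dropUntil x hx with hr
    have hspec : q.append r = w := Walk.take_spec w hx
    have hq1 : q.support.count x = 1 := Walk.count_support_takeUntil_eq_one w hx
    have hsupp : w.support = q.support ++ r.support.tail := by
      conv_lhs => rw [← hspec]
      exact Walk.support_append q r
    have hxr : x ∈ r.support.tail := by
      by_contra h
      rw [hsupp, List.count_append, List.count_eq_zero_of_not_mem h] at hcount
      omega
    have hrnil : ¬ r.Nil := by
      intro hnil
      rw [Walk.nil_iff_length_eq] at hnil
      have h2 : r.support.length = 1 := by rw [Walk.length_support, hnil]
      have := List.length_pos_iff.mpr (List.ne_nil_of_mem hxr)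
      rw [List.length_tail] at this
      omega
    have hxt : x ∈ r.tail.support := by
      rw [Walk.support_tail_of_not_nil r hrnil]; exact hxr
    set t1 := r.tail.takeUntil x hxt with ht1
    set r2 := r.tail.dropUntil x hxt with hr2
    have ht : t1.append r2 = r.tail := Walk.take_spec _ hxt
    have hrc : Walk.cons (r.adj_snd hrnil) r.tail = r := Walk.cons_tail_eq r hrnil
    have heven : Even (Walk.cons (r.adj_snd hrnil) t1).length :=
      even_length_closed c _
    have hdecomp : w.edges
        = q.edges ++ ((Walk.cons (r.adj_snd hrnil) t1).edges ++ r2.edges) := by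
      conv_lhs => rw [← hspec]
      rw [Walk.edges_append]
      congr 1
      conv_lhs => rw [← hrc]
      rw [Walk.edges_cons, Walk.edges_cons]
      congr 1
      conv_lhs => rw [← ht]
      rw [Walk.edges_append]
      rfl
    have hw' : PPk M 0 ((q.append r2).edges) := by
      rw [Walk.edges_append]
      exact ppk_splice _ _ _ (hdecomp ▸ hw) (by rw [Walk.length_edges]; exact heven)
    have hlt : (q.append r2).length < w.length := by
      rw [Walk.length_append]
      conv_rhs => rw [← hspec]
      rw [Walk.length_append]
      have h1 : r2.length ≤ r.tail.length := Walk.length_dropUntil_le _ hxt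
      have h2 : r.tail.length + 1 = r.length := Walk.length_tail_add_one hrnil
      omega
    exact extract c (q.append r2) hw'
termination_by w.length
decreasing_by exact hlt

lemma start_mem_head_edges {a b : V} (p : G.Walk a b) (h : p.edges ≠ []) :
    a ∈ p.edges.head h := by
  cases p with
  | nil => simp at h
  | cons hadj q => simp [Walk.edges_cons]

lemma end_mem_getLast_edges {a b : V} (p : G.Walk a b) (h : p.edges ≠ []) :
    b ∈ p.edges.getLast h := by
  have h' : p.reverse.edges ≠ [] := by simpa [Walk.edges_reverse] using h
  have := start_mem_head_edges p.reverse h'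
  rw [List.getLast_eq_head_reverse]
  convert this using 2
  exact (Walk.edges_reverse p).symm

lemma alt_count {α : Type*} (M : Set α) : ∀ (l : List α),
    l.Chain' (fun a b => ¬((a ∈ M) ↔ (b ∈ M))) → ∀ (h : l ≠ []), l.head h ∉ M →
    l.getLast h ∉ M →
    (l.filter (fun e => decide (e ∈ M))).length + 1
      = (l.filter (fun e => decide (e ∉ M))).length
  | [] => by intro _ h; simp at h
  | [a] => by
    intro _ h hh hl
    simp only [List.head_cons] at hh
    simp [List.filter, hh]
  | a :: b :: t => by
    intro hc h hh hl
    simp only [List.head_cons] at hh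
    have hrel := List.isChain_cons_cons.mp hc
    have hb : b ∈ M := by tauto
    have ht : t ≠ [] := by
      rintro rfl
      simp only [List.getLast] at hl
      exact hl hb
    have hl' : t.getLast ht ∉ M := by
      simpa [List.getLast_cons, ht] using hl
    have hc2 := List.isChain_cons.mp hrel.2
    have hh' : t.head ht ∉ M := by
      have := hc2.1 (t.head ht) (List.head_mem_head? ht)
      tauto
    have ih := alt_count M t hc2.2 ht hh' hl'
    simp only [List.filter_cons, decide_not] at ih ⊢
    simp [hh, hb] at ih ⊢
    omega

end Aux

/-- in a bipartite graph `G` with matching `M` and distinct unmatched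
vertices `u, v`, if there is an alternating walk from `u` to `v` starting and ending
with non-matching edges, then there is an augmenting (alternating simple) path from `u`
to `v`, and augmenting along it yields a matching of size `|M| + 1`. -/
theorem stmt14 {V : Type*} [Fintype V] (G : SimpleGraph V) (hbip : G.Colorable 2)
    (M : Set (Sym2 V)) (hM : IsMatchingSet G M)
    (u v : V) (huv : u ≠ v)
    (hu : ∀ e ∈ M, u ∉ e) (hv : ∀ e ∈ M, v ∉ e)
    (w : G.Walk u v) (halt : IsAltEdges M w.edges) (hends : EndsNotMatched M w.edges) :
    ∃ p : G.Walk u v, p.IsPath ∧ IsAltEdges M p.edges ∧ EndsNotMatched M p.edges ∧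
      IsMatchingSet G (symmDiff M {e | e ∈ p.edges}) ∧
      (symmDiff M {e | e ∈ p.edges}).ncard = M.ncard + 1 := by
  classical
  open SimpleGraph List in
  obtain ⟨c⟩ := hbip
  have hw : PPk M 0 w.edges := by
    refine ppk_of_chain w.edges 0 halt ?_
    intro h
    exact iff_of_false (hends h).1 (by simp)
  obtain ⟨p, hpath, hpp⟩ := extract c w hw
  have hlen : p.edges.length = p.length := Walk.length_edges p
  have hne : p.edges ≠ [] := by
    intro h
    exact huv (Walk.eq_of_length_eq_zero (by rw [← hlen, h]; rfl))
  have hnodupS : p.support.Nodup := hpath.support_nodup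
  have hndl : p.edges.Nodup := Walk.edges_nodup_of_support_nodup hnodupS
  have hPP : ∀ i (h : i < p.edges.length), p.edges[i] ∈ M ↔ Odd i := by
    intro i h; simpa using hpp i h
  have hhead : p.edges.head hne ∉ M := by
    rw [List.head_eq_getElem]
    intro hmem
    have := (hPP 0 (List.length_pos_iff.mpr hne)).mp hmem
    simp [Nat.odd_iff] at this
  have hlaste : p.edges.getLast hne ∉ M :=
    fun hmem => hv _ hmem (end_mem_getLast_edges p hne)
  have halt' : IsAltEdges M p.edges := chain_of_ppk p.edges 0 hpp
  have hEnds : EndsNotMatched M p.edges := fun _ => ⟨hhead, hlaste⟩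
  set P : Set (Sym2 V) := {e | e ∈ p.edges} with hPdef
  -- helper: a vertex incident to an unmatched path edge, if matched, is matched by a path edge
  have helper : ∀ (x : V) (i : ℕ), i < p.length → Even i →
      (x = p.getVert i ∨ x = p.getVert (i+1)) → ∀ e' ∈ M, x ∈ e' → e' ∈ P := by
    intro x i hi hevi hx e' he' hxe'
    obtain ⟨m, hm⟩ := hevi
    rcases hx with rfl | rfl
    · rcases Nat.eq_zero_or_pos i with rfl | hpos
      · rw [Walk.getVert_zero] at hxe'
        exact absurd hxe' (hu e' he')
      · have hfi : i - 1 < p.edges.length := by omega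
        have hfM : p.edges[i-1] ∈ M := (hPP _ hfi).mpr ⟨m-1, by omega⟩
        have hxf : p.getVert i ∈ p.edges[i-1] := by
          rw [walk_edges_getElem p _ hfi, show i-1+1 = i by omega]
          exact Sym2.mem_mk_right _ _
        by_cases hfe : p.edges[i-1] = e'
        · rw [← hfe]; exact List.getElem_mem _
        · exact absurd hxe' (hM.2 _ hfM _ he' hfe _ hxf)
    · rcases Nat.lt_or_ge (i + 1) p.length with hlt | hge
      · have hfi : i + 1 < p.edges.length := by omega
        have hfM : p.edges[i+1] ∈ M := (hPP _ hfi).mpr ⟨m, by omega⟩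
        have hxf : p.getVert (i+1) ∈ p.edges[i+1] := by
          rw [walk_edges_getElem p _ hfi]
          exact Sym2.mem_mk_left _ _
        by_cases hfe : p.edges[i+1] = e'
        · rw [← hfe]; exact List.getElem_mem _
        · exact absurd hxe' (hM.2 _ hfM _ he' hfe _ hxf)
      · have heq' : i + 1 = p.length := by omega
        rw [heq', Walk.getVert_length] at hxe'
        exact absurd hxe' (hv e' he')
  have hidx : ∀ {d : Sym2 V}, d ∈ P → d ∉ M →
      ∃ i, ∃ h : i < p.edges.length, p.edges[i] = d ∧ Even i := by
    intro d hd hdm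
    obtain ⟨i, h, hh⟩ := List.mem_iff_getElem.mp hd
    refine ⟨i, h, hh, ?_⟩
    rw [← Nat.not_odd_iff_even]
    intro ho
    exact hdm (hh ▸ (hPP i h).mpr ho)
  have hmatch : IsMatchingSet G (symmDiff M P) := by
    constructor
    · intro e he
      rw [Set.mem_symmDiff] at he
      rcases he with ⟨h1, _⟩ | ⟨h1, _⟩
      · exact hM.1 h1
      · exact Walk.edges_subset_edgeSet p h1
    · intro e he e' he' hee x hxe hxe'
      rw [Set.mem_symmDiff] at he he'
      rcases he with ⟨heM, heP⟩ | ⟨heP, heM⟩ <;>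
        rcases he' with ⟨heM', heP'⟩ | ⟨heP', heM'⟩
      · exact hM.2 e heM e' heM' hee x hxe hxe'
      · obtain ⟨i, h, hdi, hev⟩ := hidx heP' heM'
        have hx : x = p.getVert i ∨ x = p.getVert (i+1) := by
          rw [← hdi, walk_edges_getElem p i h] at hxe'
          exact Sym2.mem_iff.mp hxe'
        exact heP (helper x i (by omega) hev hx e heM hxe)
      · obtain ⟨i, h, hdi, hev⟩ := hidx heP heM
        have hx : x = p.getVert i ∨ x = p.getVert (i+1) := by
          rw [← hdi, walk_edges_getElem p i h] at hxe
          exact Sym2.mem_iff.mp hxe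
        exact heP' (helper x i (by omega) hev hx e' heM' hxe')
      · obtain ⟨i, hi, hdi, hevi⟩ := hidx heP heM
        obtain ⟨j, hj, hdj, hevj⟩ := hidx heP' heM'
        have hij : i ≠ j := fun hq => hee (by subst hq; exact hdi.symm.trans hdj)
        have hxi : x = p.getVert i ∨ x = p.getVert (i+1) := by
          rw [← hdi, walk_edges_getElem p i hi] at hxe
          exact Sym2.mem_iff.mp hxe
        have hxj : x = p.getVert j ∨ x = p.getVert (j+1) := by
          rw [← hdj, walk_edges_getElem p j hj] at hxe'
          exact Sym2.mem_iff.mp hxe'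
        obtain ⟨m, hm⟩ := hevi
        obtain ⟨n, hn⟩ := hevj
        rw [hlen] at hi hj
        rcases hxi with h1 | h1 <;> rcases hxj with h2 | h2 <;>
          [ (have := getVert_injOn hnodupS (by omega : i ≤ p.length)
              (by omega : j ≤ p.length) (h1 ▸ h2 ▸ rfl));
            (have := getVert_injOn hnodupS (by omega : i ≤ p.length)
              (by omega : j + 1 ≤ p.length) (h1 ▸ h2 ▸ rfl));
            (have := getVert_injOn hnodupS (by omega : i + 1 ≤ p.length)
              (by omega : j ≤ p.length) (h1 ▸ h2 ▸ rfl));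
            (have := getVert_injOn hnodupS (by omega : i + 1 ≤ p.length)
              (by omega : j + 1 ≤ p.length) (h1 ▸ h2 ▸ rfl))] <;>
          omega
  refine ⟨p, hpath, halt', hEnds, hmatch, ?_⟩
  -- counting
  have hfin : Finite (Sym2 V) := inferInstance
  have hPM : P ∩ M = ↑((p.edges.filter (fun e => decide (e ∈ M))).toFinset) := by
    ext e; simp [hPdef, List.mem_filter, and_comm]
  have hPnM : P \ M = ↑((p.edges.filter (fun e => decide (e ∉ M))).toFinset) := by
    ext e; simp [hPdef, List.mem_filter]
  have hcnt := alt_count M p.edges halt' hne hhead hlaste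
  have h1 : (P ∩ M).ncard + 1 = (P \ M).ncard := by
    rw [hPM, hPnM, Set.ncard_coe_finset, Set.ncard_coe_finset,
      List.toFinset_card_of_nodup (hndl.filter _),
      List.toFinset_card_of_nodup (hndl.filter _)]
    exact hcnt
  have h2 : (M ∩ P).ncard + (M \ P).ncard = M.ncard :=
    Set.ncard_inter_add_ncard_diff_eq_ncard M P (Set.toFinite M)
  have h3 : symmDiff M P = (M \ P) ∪ (P \ M) := symmDiff_def M P
  rw [h3, Set.ncard_union_eq disjoint_sdiff_sdiff (Set.toFinite _) (Set.toFinite _)]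
  rw [Set.inter_comm] at h2
  omega
end
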